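/- Suppose (tₙ) is a sequence of real numbers such that 2^{-i tₙ} → -1 and p^{-i tₙ} → 1 for every odd prime p. Then for every real a > 1, ζ(s + i tₙ) → ((2^s - 1)/(2^s + 1)) ζ(s) uniformly on the closed half-plane Re(s) ≥ a. -/

import Mathlib

open Complex Filter

lemma cpow_nat_mul' (m n : ℕ) (w : ℂ) : ((m * n : ℕ) : ℂ) ^ w = (m : ℂ) ^ w * (n : ℂ) ^ w := by
  have := mul_cpow_ofReal_nonneg (Nat.cast_nonneg m) (Nat.cast_nonneg n) w
  push_cast at this ⊢
  exact this

lemma norm_one_div_cpow (s : ℂ) (hs : s.re ≠ 0) (n : ℕ) :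
    ‖1 / (n : ℂ) ^ s‖ = 1 / (n : ℝ) ^ s.re := by
  have hs0 : s ≠ 0 := fun h => hs (by simp [h])
  rcases Nat.eq_zero_or_pos n with rfl | hn
  · simp [Complex.zero_cpow hs0, Real.zero_rpow hs]
  · rw [norm_div, norm_one, Complex.norm_natCast_cpow_of_pos hn]

lemma norm_two_cpow' (s : ℂ) : ‖(2 : ℂ) ^ s‖ = (2 : ℝ) ^ s.re := by
  have : ((2 : ℕ) : ℂ) = (2 : ℂ) := by norm_num
  rw [← this, Complex.norm_natCast_cpow_of_pos (by norm_num)]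
  norm_num

lemma two_cpow_ne_zero' (s : ℂ) : (2 : ℂ) ^ s ≠ 0 := by
  simp [Complex.cpow_eq_zero_iff]

lemma two_cpow_add_one_ne_zero (s : ℂ) (hs : 1 < s.re) : (2 : ℂ) ^ s + 1 ≠ 0 := by
  intro h
  have h2 : (2 : ℂ) ^ s = -1 := by linear_combination h
  have hn := congrArg norm h2
  rw [norm_two_cpow'] at hn
  simp only [norm_neg, norm_one] at hn
  have : (2 : ℝ) ^ (1:ℝ) < (2:ℝ) ^ s.re := Real.rpow_lt_rpow_left_iff (by norm_num) |>.mpr hs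
  rw [Real.rpow_one] at this
  linarith

lemma tsum_neg_one_pow_eq (s : ℂ) (hs : 1 < s.re) :
    ∑' n : ℕ, ((-1 : ℂ) ^ (n.factorization 2)) / (n : ℂ) ^ s
      = ((2:ℂ)^s - 1) / ((2:ℂ)^s + 1) * riemannZeta s := by
  have hs0 : s ≠ 0 := fun h => by simp [h] at hs; linarith
  have hsre : s.re ≠ 0 := by linarith
  set g : ℕ → ℂ := fun n => ((-1 : ℂ) ^ (n.factorization 2)) / (n : ℂ) ^ s with hgdef
  set f : ℕ → ℂ := fun n => 1 / (n : ℂ) ^ s with hfdef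
  have hfs : Summable f := by
    apply Summable.of_norm
    have : (fun n : ℕ => ‖f n‖) = fun n : ℕ => 1 / (n : ℝ) ^ s.re := by
      funext n; exact norm_one_div_cpow s hsre n
    rw [this]
    exact Real.summable_one_div_nat_rpow.mpr hs
  have hgs : Summable g := by
    apply Summable.of_norm
    have : (fun n : ℕ => ‖g n‖) = fun n : ℕ => 1 / (n : ℝ) ^ s.re := by
      funext n
      have : ‖g n‖ = ‖f n‖ := by
        simp only [hgdef, hfdef, norm_div, norm_pow, norm_neg, norm_one, one_pow]
      rw [this]; exact norm_one_div_cpow s hsre n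
    rw [this]
    exact Real.summable_one_div_nat_rpow.mpr hs
  have hzeta : riemannZeta s = ∑' n : ℕ, f n := zeta_eq_tsum_one_div_nat_cpow hs
  have hf2 : ∀ k : ℕ, f (2 * k) = ((2:ℂ)^s)⁻¹ * f k := by
    intro k
    rcases Nat.eq_zero_or_pos k with rfl | hk
    · simp [hfdef, Complex.zero_cpow hs0]
    · simp only [hfdef]
      rw [cpow_nat_mul' 2 k s]
      push_cast
      ring
  have hg2 : ∀ k : ℕ, g (2 * k) = -((2:ℂ)^s)⁻¹ * g k := by
    intro k
    rcases Nat.eq_zero_or_pos k with rfl | hk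
    · simp [hgdef, Complex.zero_cpow hs0]
    · simp only [hgdef]
      rw [cpow_nat_mul' 2 k s]
      have hfac : (2 * k).factorization 2 = k.factorization 2 + 1 := by
        rw [Nat.factorization_mul (by norm_num) hk.ne']
        simp [Nat.Prime.factorization Nat.prime_two, add_comm]
      rw [hfac, pow_succ]
      push_cast
      ring
  have hgodd : ∀ k : ℕ, g (2 * k + 1) = f (2 * k + 1) := by
    intro k
    simp only [hgdef, hfdef]
    rw [Nat.factorization_eq_zero_of_not_dvd (by omega), pow_zero]
  have hinj2 : Function.Injective (fun k : ℕ => 2 * k) := fun a b h => by simpa using h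
  have hinj2' : Function.Injective (fun k : ℕ => 2 * k + 1) := fun a b h => by simpa using h
  have hfe : Summable (fun k => f (2 * k)) := hfs.comp_injective hinj2
  have hfo : Summable (fun k => f (2 * k + 1)) := hfs.comp_injective hinj2'
  have hge : Summable (fun k => g (2 * k)) := hgs.comp_injective hinj2
  have hgo : Summable (fun k => g (2 * k + 1)) := hgs.comp_injective hinj2'
  have heof : ∑' k, f (2 * k) + ∑' k, f (2 * k + 1) = ∑' n, f n := tsum_even_add_odd hfe hfo
  have heog : ∑' k, g (2 * k) + ∑' k, g (2 * k + 1) = ∑' n, g n := tsum_even_add_odd hge hgo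
  have hfe' : ∑' k, f (2 * k) = ((2:ℂ)^s)⁻¹ * ∑' n, f n := by
    rw [tsum_congr hf2, tsum_mul_left]
  have hge' : ∑' k, g (2 * k) = -((2:ℂ)^s)⁻¹ * ∑' n, g n := by
    rw [tsum_congr hg2, tsum_mul_left]
  have hgo' : ∑' k, g (2 * k + 1) = ∑' k, f (2 * k + 1) := tsum_congr hgodd
  have hfo' : ∑' k, f (2 * k + 1) = ∑' n, f n - ((2:ℂ)^s)⁻¹ * ∑' n, f n := by
    rw [← hfe']; linear_combination heof
  have key : (1 + ((2:ℂ)^s)⁻¹) * ∑' n, g n = (1 - ((2:ℂ)^s)⁻¹) * ∑' n, f n := by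
    rw [hge', hgo', hfo'] at heog
    linear_combination -heog
  rw [hzeta]
  have h1 : (2:ℂ)^s ≠ 0 := two_cpow_ne_zero' s
  have h2 : (2:ℂ)^s + 1 ≠ 0 := two_cpow_add_one_ne_zero s hs
  rw [div_mul_eq_mul_div, eq_div_iff h2]
  have e1 : (1 + ((2:ℂ)^s)⁻¹) * (2:ℂ)^s = (2:ℂ)^s + 1 := by field_simp
  have e2 : (1 - ((2:ℂ)^s)⁻¹) * (2:ℂ)^s = (2:ℂ)^s - 1 := by field_simp
  calc (∑' n, g n) * ((2:ℂ)^s + 1) = ((1 + ((2:ℂ)^s)⁻¹) * ∑' n, g n) * (2:ℂ)^s := by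
        rw [← e1]; ring
    _ = ((1 - ((2:ℂ)^s)⁻¹) * ∑' n, f n) * (2:ℂ)^s := by rw [key]
    _ = ((2:ℂ)^s - 1) * ∑' n, f n := by rw [← e2]; ring

lemma tendsto_cpow_fact (t : ℕ → ℝ)
    (h2 : Tendsto (fun n => (2 : ℂ) ^ (-(t n : ℂ) * I)) atTop (nhds (-1)))
    (hp : ∀ p : ℕ, p.Prime → p ≠ 2 →
      Tendsto (fun n => (p : ℂ) ^ (-(t n : ℂ) * I)) atTop (nhds 1)) :
    ∀ m : ℕ, m ≠ 0 → Tendsto (fun k => (m : ℂ) ^ (-(t k : ℂ) * I)) atTop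
      (nhds ((-1 : ℂ) ^ (m.factorization 2))) := by
  intro m
  induction m using Nat.recOnMul with
  | zero => exact fun h => absurd rfl h
  | one => intro _; simpa using tendsto_const_nhds
  | prime p hpp =>
      intro _
      by_cases hp2 : p = 2
      · subst hp2
        have : (↑(2:ℕ) : ℂ) = (2 : ℂ) := by norm_num
        rw [this]
        simpa [Nat.Prime.factorization Nat.prime_two] using h2
      · have h := hp p hpp hp2
        have hfac : p.factorization 2 = 0 := by
          rw [Nat.Prime.factorization hpp]
          simp [Finsupp.single_apply, hp2]
        rw [hfac, pow_zero]
        exact h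
  | mul a b ha hb =>
      intro hab
      have ha0 : a ≠ 0 := fun h => hab (by simp [h])
      have hb0 : b ≠ 0 := fun h => hab (by simp [h])
      have hfac : (a * b).factorization 2 = a.factorization 2 + b.factorization 2 := by
        rw [Nat.factorization_mul ha0 hb0]; rfl
      have : ∀ k, ((a * b : ℕ) : ℂ) ^ (-(t k : ℂ) * I)
          = (a : ℂ) ^ (-(t k : ℂ) * I) * (b : ℂ) ^ (-(t k : ℂ) * I) :=
        fun k => cpow_nat_mul' a b _
      simp only [this, hfac, pow_add]
      exact (ha ha0).mul (hb hb0)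

/-- If `2^{-i tₙ} → -1` and `p^{-i tₙ} → 1` for every odd prime `p`, then for every real
`a > 1`, `ζ(s + i tₙ) → ((2^s-1)/(2^s+1)) ζ(s)` uniformly on `{s : Re s ≥ a}`. -/
theorem zeta_shift_tendstoUniformlyOn (t : ℕ → ℝ)
    (h2 : Tendsto (fun n => (2 : ℂ) ^ (-(t n : ℂ) * I)) atTop (nhds (-1)))
    (hp : ∀ p : ℕ, p.Prime → p ≠ 2 →
      Tendsto (fun n => (p : ℂ) ^ (-(t n : ℂ) * I)) atTop (nhds 1))
    (a : ℝ) (ha : 1 < a) :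
    TendstoUniformlyOn (fun n s => riemannZeta (s + (t n : ℂ) * I))
      (fun s => ((2 : ℂ) ^ s - 1) / ((2 : ℂ) ^ s + 1) * riemannZeta s)
      atTop {s : ℂ | a ≤ s.re} := by
  have hptw := tendsto_cpow_fact t h2 hp
  rw [Metric.tendstoUniformlyOn_iff]
  intro ε hε
  set u : ℕ → ℝ := fun n => 1 / (n : ℝ) ^ a with hu_def
  have hu : Summable u := Real.summable_one_div_nat_rpow.mpr ha
  have hu0 : ∀ n, 0 ≤ u n := fun n => by positivity
  set C := ∑' n, u n with hCdef
  have hC0 : 0 ≤ C := tsum_nonneg hu0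
  set ε' := ε / (4 * (C + 1)) with hε'def
  have hε'0 : 0 < ε' := by positivity
  -- choose N with small tail
  have htail := tendsto_sum_nat_add u
  have hNev : ∀ᶠ N in atTop, ∑' k, u (k + N) < ε / 8 :=
    htail.eventually_lt_const (by positivity)
  obtain ⟨N, hN⟩ := hNev.exists
  -- eventual closeness on [1, N)
  have hev : ∀ᶠ k in atTop, ∀ n ∈ Finset.range N, n ≠ 0 →
      ‖(n : ℂ) ^ (-(t k : ℂ) * I) - (-1 : ℂ) ^ (n.factorization 2)‖ < ε' := by
    rw [eventually_all_finset]
    intro n _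
    by_cases hn0 : n = 0
    · exact Eventually.of_forall (fun k h => absurd hn0 h)
    · have h1 : Tendsto (fun k => (n : ℂ) ^ (-(t k : ℂ) * I)
          - (-1 : ℂ) ^ (n.factorization 2)) atTop (nhds 0) := by
        simpa using (hptw n hn0).sub_const ((-1 : ℂ) ^ (n.factorization 2))
      have h2' : Tendsto (fun k => ‖(n : ℂ) ^ (-(t k : ℂ) * I)
          - (-1 : ℂ) ^ (n.factorization 2)‖) atTop (nhds 0) := by
        simpa using h1.norm
      exact (h2'.eventually_lt_const hε'0).mono (fun k hk _ => hk)
  filter_upwards [hev] with k hk s hs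
  have hsa : a ≤ s.re := hs
  have hsre : (1:ℝ) < s.re := lt_of_lt_of_le ha hsa
  have hsre0 : s.re ≠ 0 := by linarith
  have hs0 : s ≠ 0 := fun h => by simp [h] at hsre; linarith
  -- the three families of coefficients
  set c : ℕ → ℂ := fun n => (n : ℂ) ^ (-(t k : ℂ) * I) with hcdef
  set e : ℕ → ℂ := fun n => (-1 : ℂ) ^ (n.factorization 2) with hedef
  set w : ℕ → ℂ := fun n => 1 / (n : ℂ) ^ s with hwdef
  have hnormw : ∀ n, ‖w n‖ ≤ u n := by
    intro n
    rw [hwdef, norm_one_div_cpow s hsre0 n]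
    rcases Nat.eq_zero_or_pos n with rfl | hn
    · simp [hu_def, Real.zero_rpow (by linarith : a ≠ 0),
        Real.zero_rpow hsre0]
    · have h1n : (1:ℝ) ≤ (n:ℝ) := by exact_mod_cast hn
      have : (n:ℝ) ^ a ≤ (n:ℝ) ^ s.re := Real.rpow_le_rpow_of_exponent_le h1n hsa
      exact one_div_le_one_div_of_le (by positivity) this
  have hnormc : ∀ n, ‖c n‖ ≤ 1 := by
    intro n
    rcases Nat.eq_zero_or_pos n with rfl | hn
    · rcases eq_or_ne (-(t k : ℂ) * I) 0 with h | h
      · rw [hcdef]; simp only [Nat.cast_zero, h, Complex.cpow_zero]; norm_num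
      · rw [hcdef]; simp only [Nat.cast_zero, Complex.zero_cpow h]; norm_num
    · rw [hcdef]
      simp only
      rw [Complex.norm_natCast_cpow_of_pos hn]
      have : (-(t k : ℂ) * I).re = 0 := by simp
      rw [this, Real.rpow_zero]
  have hnorme : ∀ n, ‖e n‖ = 1 := by
    intro n; simp [hedef]
  -- summabilities
  have hsumcw : Summable (fun n => c n * w n) := by
    apply Summable.of_norm
    apply Summable.of_nonneg_of_le (fun n => norm_nonneg _) _ hu
    intro n
    rw [norm_mul]
    calc ‖c n‖ * ‖w n‖ ≤ 1 * u n :=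
          mul_le_mul (hnormc n) (hnormw n) (norm_nonneg _) zero_le_one
      _ = u n := one_mul _
  have hsumew : Summable (fun n => e n * w n) := by
    apply Summable.of_norm
    apply Summable.of_nonneg_of_le (fun n => norm_nonneg _) _ hu
    intro n
    rw [norm_mul, hnorme n, one_mul]
    exact hnormw n
  -- express both sides as tsums
  have hFk : riemannZeta (s + (t k : ℂ) * I) = ∑' n, c n * w n := by
    have hre : 1 < (s + (t k : ℂ) * I).re := by
      simpa [Complex.add_re, Complex.mul_I_re] using hsre
    rw [zeta_eq_tsum_one_div_nat_cpow hre]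
    refine tsum_congr fun n => ?_
    rcases Nat.eq_zero_or_pos n with rfl | hn
    · have h0 : s + (t k : ℂ) * I ≠ 0 := fun h => by
        rw [h] at hre; norm_num at hre
      simp [hcdef, hwdef, Complex.zero_cpow h0, Complex.zero_cpow hs0]
    · have hn0 : (n : ℂ) ≠ 0 := Nat.cast_ne_zero.mpr hn.ne'
      rw [hcdef, hwdef]
      simp only
      rw [Complex.cpow_add _ _ hn0, neg_mul, Complex.cpow_neg]
      ring
  have hL : ((2 : ℂ) ^ s - 1) / ((2 : ℂ) ^ s + 1) * riemannZeta s = ∑' n, e n * w n := by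
    rw [← tsum_neg_one_pow_eq s hsre]
    exact tsum_congr fun n => by rw [hedef, hwdef]; simp only [mul_one_div]
  rw [dist_eq_norm, hFk, hL, ← Summable.tsum_sub hsumew hsumcw]
  -- norm estimate
  set d : ℕ → ℂ := fun n => e n * w n - c n * w n with hddef
  have hnormd : ∀ n, ‖d n‖ ≤ 2 * u n := by
    intro n
    rw [hddef]
    simp only
    rw [← sub_mul, norm_mul]
    have h1 : ‖e n - c n‖ ≤ 2 := by
      calc ‖e n - c n‖ ≤ ‖e n‖ + ‖c n‖ := norm_sub_le _ _
        _ ≤ 1 + 1 := add_le_add (le_of_eq (hnorme n)) (hnormc n)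
        _ = 2 := by norm_num
    exact mul_le_mul h1 (hnormw n) (norm_nonneg _) (by norm_num)
  have hsumnd : Summable (fun n => ‖d n‖) :=
    Summable.of_nonneg_of_le (fun n => norm_nonneg _) hnormd (hu.mul_left 2)
  calc ‖∑' n, d n‖ ≤ ∑' n, ‖d n‖ := norm_tsum_le_tsum_norm hsumnd
    _ = ∑ n ∈ Finset.range N, ‖d n‖ + ∑' n, ‖d (n + N)‖ :=
        (Summable.sum_add_tsum_nat_add N hsumnd).symm
    _ < ε := by
        have hb1 : ∑ n ∈ Finset.range N, ‖d n‖ ≤ ε' * C := by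
          have step : ∀ n ∈ Finset.range N, ‖d n‖ ≤ ε' * u n := by
            intro n hn
            by_cases hn0 : n = 0
            · subst hn0
              have hw0 : w 0 = 0 := by
                simp [hwdef, Complex.zero_cpow hs0]
              have : d 0 = 0 := by rw [hddef]; simp [hw0]
              rw [this, norm_zero]
              positivity
            · have hclose := hk n hn hn0
              rw [hddef]
              simp only
              rw [← sub_mul, norm_mul]
              have h1 : ‖e n - c n‖ ≤ ε' := by
                rw [norm_sub_rev]
                exact le_of_lt hclose
              exact mul_le_mul h1 (hnormw n) (norm_nonneg _) (le_of_lt hε'0)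
          calc ∑ n ∈ Finset.range N, ‖d n‖ ≤ ∑ n ∈ Finset.range N, ε' * u n :=
                Finset.sum_le_sum step
            _ = ε' * ∑ n ∈ Finset.range N, u n := by rw [Finset.mul_sum]
            _ ≤ ε' * C :=
                mul_le_mul_of_nonneg_left (Summable.sum_le_tsum _ (fun n _ => hu0 n) hu)
                  (le_of_lt hε'0)
        have hb1' : ε' * C < ε / 4 := by
          have h1 : ε' * C < ε' * (C + 1) :=
            mul_lt_mul_of_pos_left (lt_add_one C) hε'0
          have h2' : ε' * (C + 1) = ε / 4 := by
            rw [hε'def]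
            field_simp
          linarith
        have hb2 : ∑' n, ‖d (n + N)‖ ≤ 2 * ∑' n, u (n + N) := by
          have hs1 : Summable (fun n => ‖d (n + N)‖) := by
            have : (fun n => ‖d (n + N)‖) = (fun n => ‖d n‖) ∘ (fun n => n + N) := rfl
            rw [this]
            exact hsumnd.comp_injective (add_left_injective N)
          have hs2 : Summable (fun n => 2 * u (n + N)) := by
            have : (fun n => 2 * u (n + N)) = (fun n => 2 * u n) ∘ (fun n => n + N) := rfl
            rw [this]
            exact (hu.mul_left 2).comp_injective (add_left_injective N)
          calc ∑' n, ‖d (n + N)‖ ≤ ∑' n, 2 * u (n + N) :=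
                Summable.tsum_le_tsum (fun n => hnormd (n + N)) hs1 hs2
            _ = 2 * ∑' n, u (n + N) := tsum_mul_left
        have hb2' : 2 * ∑' n, u (n + N) < ε / 4 := by linarith
        linarith
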